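/- Let 0 < β < 1 and b locally integrable on ℝ^n. If b ∈ Λ_β(ℝ^n) and b ≥ 0, then there is a constant C such that for every ball B, |B|^{−β/n} ( |B|^{−1} ∫_B |b(x) − M_B(b)(x)| dx ) ≤ C ‖b‖_{Λ_β}, where M_B is the maximal operator relative to B. -/

import Mathlib

open MeasureTheory Metric

noncomputable def fracMax (n : ℕ) (α : ℝ) (f : EuclideanSpace ℝ (Fin n) → ℝ)
    (x : EuclideanSpace ℝ (Fin n)) : ℝ :=
  sSup {t : ℝ | ∃ (c : EuclideanSpace ℝ (Fin n)) (r : ℝ), 0 < r ∧ x ∈ ball c r ∧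
    t = (volume (ball c r)).toReal ^ (α / (n : ℝ) - 1) * ∫ y in ball c r, |f y|}

noncomputable def locFracMax (n : ℕ) (α : ℝ) (B : Set (EuclideanSpace ℝ (Fin n)))
    (b : EuclideanSpace ℝ (Fin n) → ℝ) (x : EuclideanSpace ℝ (Fin n)) : ℝ :=
  sSup {t : ℝ | ∃ (c : EuclideanSpace ℝ (Fin n)) (r : ℝ), 0 < r ∧ x ∈ ball c r ∧ ball c r ⊆ B ∧
    t = (volume (ball c r)).toReal ^ (α / (n : ℝ) - 1) * ∫ y in ball c r, |b y|}

noncomputable def maxComm (n : ℕ) (α : ℝ) (b f : EuclideanSpace ℝ (Fin n) → ℝ)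
    (x : EuclideanSpace ℝ (Fin n)) : ℝ :=
  sSup {t : ℝ | ∃ (c : EuclideanSpace ℝ (Fin n)) (r : ℝ), 0 < r ∧ x ∈ ball c r ∧
    t = (volume (ball c r)).toReal ^ (α / (n : ℝ) - 1) * ∫ y in ball c r, |b x - b y| * |f y|}

noncomputable def lipSemi (n : ℕ) (β : ℝ) (b : EuclideanSpace ℝ (Fin n) → ℝ) : ℝ :=
  sSup {t : ℝ | ∃ x y : EuclideanSpace ℝ (Fin n), x ≠ y ∧ t = |b x - b y| / dist x y ^ β}

noncomputable def bavg (n : ℕ) (b : EuclideanSpace ℝ (Fin n) → ℝ)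
    (c : EuclideanSpace ℝ (Fin n)) (r : ℝ) : ℝ :=
  (volume (ball c r)).toReal⁻¹ * ∫ x in ball c r, b x

theorem stmt_14 (n : ℕ) (hn : 0 < n) (β : ℝ) (hβ0 : 0 < β) (hβ1 : β < 1)
    (b : EuclideanSpace ℝ (Fin n) → ℝ) (hb : LocallyIntegrable b volume)
    (hlip : ∃ L : ℝ, ∀ x y, |b x - b y| ≤ L * dist x y ^ β)
    (hpos : ∀ x, 0 ≤ b x) :
    ∃ C : ℝ, 0 < C ∧ ∀ (c : EuclideanSpace ℝ (Fin n)) (r : ℝ), 0 < r →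
      (volume (ball c r)).toReal ^ (-(β / (n : ℝ))) *
        ((volume (ball c r)).toReal⁻¹ *
          ∫ x in ball c r, |b x - locFracMax n 0 (ball c r) b x|) ≤
        C * lipSemi n β b := by
  haveI : Nonempty (Fin n) := ⟨⟨0, hn⟩⟩
  obtain ⟨L0, hL0⟩ := hlip
  -- properties of lipSemi
  set T := {t : ℝ | ∃ x y : EuclideanSpace ℝ (Fin n), x ≠ y ∧ t = |b x - b y| / dist x y ^ β}
    with hT
  have hTbdd : BddAbove T := by
    refine ⟨max L0 0, ?_⟩
    rintro t ⟨x, y, hxy, rfl⟩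
    have hd : 0 < dist x y := dist_pos.2 hxy
    have hdb : 0 < dist x y ^ β := Real.rpow_pos_of_pos hd β
    exact le_trans ((div_le_iff₀ hdb).2 (hL0 x y)) (le_max_left _ _)
  set L := lipSemi n β b with hLdef
  have hLnn : 0 ≤ L := by
    refine Real.sSup_nonneg ?_
    rintro t ⟨x, y, hxy, rfl⟩
    positivity
  have hLb : ∀ x y, |b x - b y| ≤ L * dist x y ^ β := by
    intro x y
    by_cases h : x = y
    · subst h; simp [Real.zero_rpow hβ0.ne']
    · have hmem : |b x - b y| / dist x y ^ β ∈ T := ⟨x, y, h, rfl⟩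
      have := le_csSup hTbdd hmem
      have hdb : 0 < dist x y ^ β := Real.rpow_pos_of_pos (dist_pos.2 h) β
      rw [div_le_iff₀ hdb] at this
      exact this
  -- the unit ball volume
  set V1 : ℝ := (volume (ball (0 : EuclideanSpace ℝ (Fin n)) 1)).toReal with hV1def
  have hV1 : 0 < V1 := by
    refine ENNReal.toReal_pos (measure_ball_pos volume _ one_pos).ne' measure_ball_lt_top.ne
  refine ⟨2 ^ β * V1 ^ (-(β / (n : ℝ))), by positivity, ?_⟩
  intro c r hr
  set V : ℝ := (volume (ball c r)).toReal with hVdef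
  have hV : 0 < V :=
    ENNReal.toReal_pos (measure_ball_pos volume _ hr).ne' measure_ball_lt_top.ne
  set K : ℝ := L * (2 * r) ^ β with hKdef
  have hK0 : 0 ≤ K := by positivity
  have hexp : (0 : ℝ) / (n : ℝ) - 1 = -1 := by simp
  -- pointwise bound on the maximal function
  have hpt : ∀ x ∈ ball c r, |b x - locFracMax n 0 (ball c r) b x| ≤ K := by
    intro x hx
    set S := {t : ℝ | ∃ (c' : EuclideanSpace ℝ (Fin n)) (r' : ℝ), 0 < r' ∧ x ∈ ball c' r' ∧ ball c' r' ⊆ ball c r ∧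
      t = (volume (ball c' r')).toReal ^ ((0 : ℝ) / (n : ℝ) - 1) * ∫ y in ball c' r', |b y|}
      with hS
    have hMS : locFracMax n 0 (ball c r) b x = sSup S := rfl
    -- every element of S is at most b x + K
    have hub : ∀ t ∈ S, t ≤ b x + K := by
      rintro t ⟨c', r', hr', hx', hsub, rfl⟩
      have hV' : 0 < (volume (ball c' r')).toReal :=
        ENNReal.toReal_pos (measure_ball_pos volume _ hr').ne' measure_ball_lt_top.ne
      have hint : IntegrableOn b (ball c' r') volume :=
        (hb.integrableOn_isCompact (isCompact_closedBall c' r')).mono_set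
          ball_subset_closedBall
      have habs : ∀ y, |b y| = b y := fun y => abs_of_nonneg (hpos y)
      have hbd : ∀ y ∈ ball c' r', b y ≤ b x + K := by
        intro y hy
        have hxy : dist x y < 2 * r := by
          have h1 : dist x c < r := mem_ball.1 (hsub hx')
          have h2 : dist y c < r := mem_ball.1 (hsub hy)
          calc dist x y ≤ dist x c + dist c y := dist_triangle _ _ _
            _ < r + r := by rw [dist_comm c y]; linarith
            _ = 2 * r := by ring
        have : |b y - b x| ≤ L * (2 * r) ^ β := by
          refine le_trans (hLb y x) ?_
          have : dist y x ^ β ≤ (2 * r) ^ β :=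
            Real.rpow_le_rpow dist_nonneg (by rw [dist_comm]; exact hxy.le) hβ0.le
          exact mul_le_mul_of_nonneg_left this hLnn
        have := (abs_le.1 this).2
        linarith
      have hI : ∫ y in ball c' r', |b y| ≤ (volume (ball c' r')).toReal * (b x + K) := by
        simp_rw [habs]
        calc ∫ y in ball c' r', b y ≤ ∫ _ in ball c' r', (b x + K) :=
              setIntegral_mono_on hint (integrableOn_const measure_ball_lt_top.ne)
                measurableSet_ball hbd
          _ = (volume (ball c' r')).toReal * (b x + K) := by
              rw [setIntegral_const]; simp [smul_eq_mul, Measure.real]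
      rw [hexp, Real.rpow_neg_one]
      calc (volume (ball c' r')).toReal⁻¹ * ∫ y in ball c' r', |b y|
          ≤ (volume (ball c' r')).toReal⁻¹ * ((volume (ball c' r')).toReal * (b x + K)) := by
            exact mul_le_mul_of_nonneg_left hI (inv_nonneg.2 ENNReal.toReal_nonneg)
        _ = b x + K := by field_simp
    have hSbdd : BddAbove S := ⟨b x + K, hub⟩
    -- lower bound : b x ≤ sSup S
    have hlow : b x ≤ sSup S := by
      refine le_of_forall_pos_le_add ?_
      intro ε hε
      set δ0 : ℝ := r - dist x c with hδ0def
      have hδ0 : 0 < δ0 := by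
        have := mem_ball.1 hx; simpa [hδ0def] using sub_pos.2 this
      set δ : ℝ := min δ0 ((ε / (L + 1)) ^ (β⁻¹ : ℝ)) with hδdef
      have hδpos : 0 < δ := lt_min hδ0 (Real.rpow_pos_of_pos (by positivity) _)
      have hδsub : ball x δ ⊆ ball c r := by
        refine ball_subset_ball' ?_
        have : δ ≤ δ0 := min_le_left _ _
        simp only [hδ0def] at this
        linarith
      have hLδ : L * δ ^ β ≤ ε := by
        have h1 : δ ^ β ≤ ε / (L + 1) := by
          have h2 : δ ^ β ≤ ((ε / (L + 1)) ^ (β⁻¹ : ℝ)) ^ β :=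
            Real.rpow_le_rpow hδpos.le (min_le_right _ _) hβ0.le
          rwa [Real.rpow_inv_rpow (by positivity) hβ0.ne'] at h2
        calc L * δ ^ β ≤ L * (ε / (L + 1)) := mul_le_mul_of_nonneg_left h1 hLnn
          _ ≤ ε := by
            rw [mul_div_assoc']
            exact (div_le_iff₀ (by positivity)).2 (by nlinarith)
      have hVδ : 0 < (volume (ball x δ)).toReal :=
        ENNReal.toReal_pos (measure_ball_pos volume _ hδpos).ne' measure_ball_lt_top.ne
      have hint : IntegrableOn b (ball x δ) volume :=
        (hb.integrableOn_isCompact (isCompact_closedBall x δ)).mono_set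
          ball_subset_closedBall
      have habs : ∀ y, |b y| = b y := fun y => abs_of_nonneg (hpos y)
      have hbd : ∀ y ∈ ball x δ, b x - ε ≤ b y := by
        intro y hy
        have h1 : |b x - b y| ≤ L * dist x y ^ β := hLb x y
        have h2 : dist x y ^ β ≤ δ ^ β :=
          Real.rpow_le_rpow dist_nonneg (by rw [dist_comm]; exact (mem_ball.1 hy).le) hβ0.le
        have h3 : |b x - b y| ≤ ε :=
          le_trans h1 (le_trans (mul_le_mul_of_nonneg_left h2 hLnn) hLδ)
        have := (abs_le.1 h3).2
        linarith
      have hI : (volume (ball x δ)).toReal * (b x - ε) ≤ ∫ y in ball x δ, |b y| := by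
        simp_rw [habs]
        calc (volume (ball x δ)).toReal * (b x - ε)
            = ∫ _ in ball x δ, (b x - ε) := by rw [setIntegral_const]; simp [smul_eq_mul, Measure.real]
          _ ≤ ∫ y in ball x δ, b y :=
              setIntegral_mono_on (integrableOn_const measure_ball_lt_top.ne) hint
                measurableSet_ball hbd
      have hmem : (volume (ball x δ)).toReal ^ ((0 : ℝ) / (n : ℝ) - 1) *
          ∫ y in ball x δ, |b y| ∈ S :=
        ⟨x, δ, hδpos, mem_ball_self hδpos, hδsub, rfl⟩
      have h4 : b x - ε ≤ (volume (ball x δ)).toReal ^ ((0 : ℝ) / (n : ℝ) - 1) *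
          ∫ y in ball x δ, |b y| := by
        rw [hexp, Real.rpow_neg_one]
        calc b x - ε = (volume (ball x δ)).toReal⁻¹ *
              ((volume (ball x δ)).toReal * (b x - ε)) := by field_simp
          _ ≤ (volume (ball x δ)).toReal⁻¹ * ∫ y in ball x δ, |b y| :=
              mul_le_mul_of_nonneg_left hI (inv_nonneg.2 ENNReal.toReal_nonneg)
      linarith [le_csSup hSbdd hmem]
    have hup : sSup S ≤ b x + K := Real.sSup_le hub (add_nonneg (hpos x) hK0)
    rw [hMS, abs_le]
    constructor <;> linarith
  -- integral bound
  have hint : ∫ x in ball c r, |b x - locFracMax n 0 (ball c r) b x| ≤ K * V := by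
    have h1 : ∫ x in ball c r, |b x - locFracMax n 0 (ball c r) b x| ≤
        ∫ _ in ball c r, K := by
      refine integral_mono_of_nonneg (ae_of_all _ fun x => abs_nonneg _)
        (integrableOn_const measure_ball_lt_top.ne) ?_
      exact (ae_restrict_iff' measurableSet_ball).2 (ae_of_all _ hpt)
    calc ∫ x in ball c r, |b x - locFracMax n 0 (ball c r) b x| ≤ ∫ _ in ball c r, K := h1
      _ = V * K := by rw [setIntegral_const]; simp [hVdef, smul_eq_mul, Measure.real]
      _ = K * V := mul_comm _ _
  -- volume computation
  have hball : V = r ^ n * V1 := by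
    rw [hVdef, Measure.addHaar_ball volume c hr.le, finrank_euclideanSpace_fin,
      ENNReal.toReal_mul, ENNReal.toReal_ofReal (by positivity)]
  have hVpow : V ^ (-(β / (n : ℝ))) = r ^ (-β) * V1 ^ (-(β / (n : ℝ))) := by
    rw [hball, Real.mul_rpow (by positivity) hV1.le]
    congr 1
    rw [← Real.rpow_natCast r n, ← Real.rpow_mul hr.le]
    congr 1
    have hn' : (n : ℝ) ≠ 0 := Nat.cast_ne_zero.2 hn.ne'
    field_simp
  -- final computation
  have hfinal : V ^ (-(β / (n : ℝ))) * K = 2 ^ β * V1 ^ (-(β / (n : ℝ))) * L := by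
    rw [hVpow, hKdef]
    have h2r : (2 * r : ℝ) ^ β = 2 ^ β * r ^ β := Real.mul_rpow (by norm_num) hr.le
    have hrne : r ^ β ≠ 0 := (Real.rpow_pos_of_pos hr β).ne'
    rw [h2r, Real.rpow_neg hr.le]
    field_simp
  calc V ^ (-(β / (n : ℝ))) * (V⁻¹ * ∫ x in ball c r, |b x - locFracMax n 0 (ball c r) b x|)
      ≤ V ^ (-(β / (n : ℝ))) * (V⁻¹ * (K * V)) := by
        refine mul_le_mul_of_nonneg_left (mul_le_mul_of_nonneg_left hint ?_) ?_
        · positivity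
        · positivity
    _ = V ^ (-(β / (n : ℝ))) * K := by field_simp
    _ = 2 ^ β * V1 ^ (-(β / (n : ℝ))) * L := hfinal
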